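/- Suppose M is nonempty. Define ψ : ℝⁿ → ℝⁿ by ψ(x) = φ^L(x) − L·d for x ∉ M and ψ(x) = x for x ∈ M. Fix z₀ ∈ ℝⁿ \ M, set y₀ = z₀, y_k = ψ(y_{k−1}), and z_k = φ_{k−1}^L(z_{k−1}) for k ≥ 1. Then for every k ∈ ℕ such that y_j ∉ M for all 0 ≤ j < k, one has dist(z_k, M_k) = dist(y_k, M), where M_k = {x ∈ ℝⁿ : ⟨a_i, x − kL·d⟩ ≤ b_i for all i} and dist denotes the infimum distance from a point to a set. -/

import Mathlib

/-- Equation (24) in the proof of Theorem 1: `dist(z_k, M_k) = dist(y_k, M)`. -/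
theorem dist_z_Mk_eq_dist_y_M
    (n m : ℕ) (hn : 1 ≤ n) (hm : 1 ≤ m)
    (a : Fin m → EuclideanSpace ℝ (Fin n)) (ha : ∀ i, a i ≠ 0)
    (b : Fin m → ℝ) (lam : ℝ)
    (d : EuclideanSpace ℝ (Fin n)) (L : ℕ) (hL : 1 ≤ L)
    (φ : EuclideanSpace ℝ (Fin n) → EuclideanSpace ℝ (Fin n))
    (hφ : ∀ x, φ x =
      x - (lam / m) • ∑ i, ((max ((inner ℝ (a i) x : ℝ) - b i) 0) / ‖a i‖ ^ 2) • a i)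
    (φfam : ℕ → EuclideanSpace ℝ (Fin n) → EuclideanSpace ℝ (Fin n))
    (hφfam : ∀ k x, φfam k x =
      x - (lam / m) • ∑ i,
        ((max ((inner ℝ (a i) (x - ((k * L : ℕ) : ℝ) • d) : ℝ) - b i) 0) / ‖a i‖ ^ 2) • a i)
    (M : Set (EuclideanSpace ℝ (Fin n)))
    (hM : M = {x | ∀ i, (inner ℝ (a i) x : ℝ) ≤ b i})
    (Mk : ℕ → Set (EuclideanSpace ℝ (Fin n)))
    (hMk : ∀ k, Mk k = {x | ∀ i, (inner ℝ (a i) (x - ((k * L : ℕ) : ℝ) • d) : ℝ) ≤ b i})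
    (hMne : M.Nonempty)
    (ψ : EuclideanSpace ℝ (Fin n) → EuclideanSpace ℝ (Fin n))
    (hψ_out : ∀ x ∉ M, ψ x = φ^[L] x - (L : ℝ) • d)
    (hψ_in : ∀ x ∈ M, ψ x = x)
    (z₀ : EuclideanSpace ℝ (Fin n)) (hz₀ : z₀ ∉ M)
    (y : ℕ → EuclideanSpace ℝ (Fin n))
    (hy0 : y 0 = z₀) (hy : ∀ k, y (k + 1) = ψ (y k))
    (z : ℕ → EuclideanSpace ℝ (Fin n))
    (hz0 : z 0 = z₀) (hz : ∀ k, z (k + 1) = (φfam k)^[L] (z k)) :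
    ∀ k : ℕ, (∀ j < k, y j ∉ M) →
      Metric.infDist (z k) (Mk k) = Metric.infDist (y k) M := by
  -- conjugation: φfam k x = φ (x - c k • d) + c k • d
  have hconj : ∀ k x, φfam k x = φ (x - ((k * L : ℕ) : ℝ) • d) + ((k * L : ℕ) : ℝ) • d := by
    intro k x
    rw [hφfam, hφ]
    abel
  have hiter : ∀ k l x, (φfam k)^[l] x
      = φ^[l] (x - ((k * L : ℕ) : ℝ) • d) + ((k * L : ℕ) : ℝ) • d := by
    intro k l
    induction l with
    | zero => intro x; simp
    | succ l ih =>
      intro x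
      rw [Function.iterate_succ_apply, Function.iterate_succ_apply, hconj]
      rw [ih]
      congr 1
      congr 1
      abel
  -- z k = y k + (k*L) • d
  have key : ∀ k : ℕ, (∀ j < k, y j ∉ M) → z k = y k + ((k * L : ℕ) : ℝ) • d := by
    intro k
    induction k with
    | zero => intro _; simp [hz0, hy0]
    | succ k ih =>
      intro h
      have hzk := ih (fun j hj => h j (Nat.lt_succ_of_lt hj))
      have hyk : y k ∉ M := h k (Nat.lt_succ_self k)
      rw [hz, hiter, hzk, hy, hψ_out _ hyk]
      have : y k + ((k * L : ℕ) : ℝ) • d - ((k * L : ℕ) : ℝ) • d = y k := by abel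
      rw [this]
      push_cast
      module
  intro k hk
  -- Mk k is the image of M under translation by (k*L)•d
  set c : ℝ := ((k * L : ℕ) : ℝ)
  have hIso : Isometry (fun x : EuclideanSpace ℝ (Fin n) => x + c • d) :=
    Isometry.of_dist_eq (fun x y => by simp [dist_eq_norm])
  have himg : Mk k = (fun x : EuclideanSpace ℝ (Fin n) => x + c • d) '' M := by
    rw [hMk, hM]
    ext x
    simp only [Set.mem_image, Set.mem_setOf_eq]
    constructor
    · intro hx
      exact ⟨x - c • d, hx, by abel⟩
    · rintro ⟨w, hw, rfl⟩ i
      have hww : w + c • d - c • d = w := by abel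
      show (inner ℝ (a i) (w + c • d - c • d) : ℝ) ≤ b i
      rw [hww]; exact hw i
  rw [key k hk, himg]
  exact Metric.infDist_image hIso
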